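/- Let p ∈ [1,∞) and let φ be a nonnegative function in L¹_loc(0,∞) with ∫₀^∞ t^{1/p−1} φ(t) dt < ∞. Then for every f ∈ H_a^p(ℂ₊) and every x ∈ ℝ, the nontangential maximal function satisfies the pointwise bound 𝓜(𝓗_φ f)(x) ≤ H_φ(𝓜 f)(x), where H_φ(𝓜 f)(x) = ∫₀^∞ 𝓜f(x/t) φ(t)/t dt. -/

import Mathlib

open MeasureTheory Complex Filter Set Topology ENNReal NNReal

/-- The Hardy norm on the upper half-plane: `sup_{y>0} ‖f (· + iy)‖_{L^p(ℝ)}`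
(for `p = ∞` this is the sup norm, via the essential supremum on each horizontal line). -/
noncomputable def hardyNorm (p : ℝ≥0∞) (f : ℂ → ℂ) : ℝ≥0∞ :=
  ⨆ y ∈ Set.Ioi (0 : ℝ), eLpNorm (fun x : ℝ => f (x + y * Complex.I)) p volume

/-- Membership in the holomorphic Hardy space `H_a^p(ℂ₊)`. -/
def MemHardy (p : ℝ≥0∞) (f : ℂ → ℂ) : Prop :=
  DifferentiableOn ℂ f {z : ℂ | 0 < z.im} ∧ hardyNorm p f < ⊤

/-- The Hausdorff operator on holomorphic functions on the upper half-plane: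
`𝓗_φ f (z) = ∫₀^∞ f(z/t) φ(t)/t dt`. -/
noncomputable def hausdorffC (φ : ℝ → ℝ) (f : ℂ → ℂ) (z : ℂ) : ℂ :=
  ∫ t in Set.Ioi (0 : ℝ), (φ t / t) • f (z / (t : ℂ))

/-- The nontangential maximal function `𝓜 f (x) = sup_{|t-x|<y} |f(t+iy)|`. -/
noncomputable def ntMax (f : ℂ → ℂ) (x : ℝ) : ℝ≥0∞ :=
  ⨆ (t : ℝ) (y : ℝ) (_ : |t - x| < y), (‖f (t + y * Complex.I)‖₊ : ℝ≥0∞)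

/-- Pointwise bound in the proof of Lemma 2.3(i): `𝓜(𝓗_φ f)(x) ≤ H_φ(𝓜 f)(x)`. -/
theorem ntMax_hausdorff_le (p : ℝ≥0∞) (hp : 1 ≤ p) (hptop : p ≠ ⊤)
    (φ : ℝ → ℝ) (hφ : ∀ t, 0 ≤ φ t)
    (hloc : LocallyIntegrableOn φ (Set.Ioi 0))
    (hint : IntegrableOn (fun t : ℝ => t ^ ((1 / p).toReal - 1) * φ t) (Set.Ioi 0))
    (f : ℂ → ℂ) (hf : MemHardy p f) (x : ℝ) :
    ntMax (hausdorffC φ f) x ≤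
      ∫⁻ t in Set.Ioi (0 : ℝ), ENNReal.ofReal (φ t / t) * ntMax f (x / t) := by
  rw [ntMax]
  refine iSup_le fun t => iSup_le fun y => iSup_le fun hty => ?_
  have hy : 0 < y := lt_of_le_of_lt (abs_nonneg _) hty
  calc (‖hausdorffC φ f (↑t + ↑y * Complex.I)‖₊ : ℝ≥0∞)
      ≤ ∫⁻ s in Set.Ioi (0:ℝ), ‖(φ s / s) • f ((↑t + ↑y * Complex.I) / (s:ℂ))‖₊ :=
        enorm_integral_le_lintegral_enorm _
    _ ≤ _ := ?_
  refine lintegral_mono_ae ((ae_restrict_iff' measurableSet_Ioi).2 (ae_of_all _ fun s hs => ?_))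
  have hs0 : (0:ℝ) < s := hs
  rw [nnnorm_smul, ENNReal.coe_mul, ← enorm_eq_nnnorm, Real.enorm_eq_ofReal (div_nonneg (hφ s) hs0.le)]
  gcongr
  have hz : (↑t + ↑y * Complex.I) / (s:ℂ) = ↑(t/s) + ↑(y/s) * Complex.I := by
    have : (s:ℂ) ≠ 0 := by exact_mod_cast hs0.ne'
    field_simp
    push_cast
    field_simp
  rw [hz, ntMax]
  have hcond : |t/s - x/s| < y/s := by
    rw [div_sub_div_same, abs_div, abs_of_pos hs0]
    exact (div_lt_div_iff_of_pos_right hs0).2 hty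
  exact le_iSup_of_le (t/s) (le_iSup_of_le (y/s) (le_iSup_of_le hcond le_rfl))
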